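/- With the setup of the PUT lemma (C₁ = A Ω₁ Aᴴ, C₂ = A Ω₂ Aᵀ, C₂ = U Σ Uᵀ Takagi, C̃₁ = Σ^{-1/2} Uᴴ C₁ U Σ^{-1/2} = V Λ Vᴴ with Vᵀ V = I), the matrix X := U Σ^{-1/2} V̄ satisfies Xᴴ C₂ X̄ = I and Xᴴ C₁ X = Λ, which is diagonal. -/

import Mathlib

open Matrix Complex

/-- In the PUT setup, `X := U Σ^{-1/2} V̄` satisfies
`Xᴴ C₂ X̄ = I` and `Xᴴ C₁ X = Λ`, which is diagonal. -/
theorem stmt_11 (m : ℕ) (A U V C₁ C₂ : Matrix (Fin m) (Fin m) ℂ)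
    (ω₁ lam : Fin m → ℂ) (ω₂ σ : Fin m → ℝ)
    (hA : IsUnit A.det)
    (hω₂ : ∀ i, 0 < ω₂ i) (hσ : ∀ i, 0 < σ i)
    (hC₁ : C₁ = A * Matrix.diagonal ω₁ * Aᴴ)
    (hC₂ : C₂ = A * Matrix.diagonal (fun i => (ω₂ i : ℂ)) * Aᵀ)
    (hU : U ∈ Matrix.unitaryGroup (Fin m) ℂ)
    (hTakagi : C₂ = U * Matrix.diagonal (fun i => (σ i : ℂ)) * Uᵀ)
    (hV : Vᵀ * V = 1)
    (hVLV : Matrix.diagonal (fun i => ((Real.sqrt (σ i))⁻¹ : ℂ)) * Uᴴ * C₁ * U *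
        Matrix.diagonal (fun i => ((Real.sqrt (σ i))⁻¹ : ℂ)) =
      V * Matrix.diagonal lam * Vᴴ) :
    (U * Matrix.diagonal (fun i => ((Real.sqrt (σ i))⁻¹ : ℂ)) *
          V.map (starRingEnd ℂ))ᴴ * C₂ *
        ((U * Matrix.diagonal (fun i => ((Real.sqrt (σ i))⁻¹ : ℂ)) *
          V.map (starRingEnd ℂ)).map (starRingEnd ℂ)) = 1 ∧
    (U * Matrix.diagonal (fun i => ((Real.sqrt (σ i))⁻¹ : ℂ)) *
          V.map (starRingEnd ℂ))ᴴ * C₁ *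
        (U * Matrix.diagonal (fun i => ((Real.sqrt (σ i))⁻¹ : ℂ)) *
          V.map (starRingEnd ℂ)) = Matrix.diagonal lam := by
  set c : Fin m → ℂ := fun i => ((Real.sqrt (σ i))⁻¹ : ℂ) with hc
  set S : Matrix (Fin m) (Fin m) ℂ := Matrix.diagonal c with hSdef
  set D : Matrix (Fin m) (Fin m) ℂ := Matrix.diagonal (fun i => (σ i : ℂ)) with hDdef
  set Vb : Matrix (Fin m) (Fin m) ℂ := V.map (starRingEnd ℂ) with hVbdef
  have hstarc : star c = c := by
    funext i
    simp [hc]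
  have hSH : Sᴴ = S := by
    rw [hSdef, Matrix.diagonal_conjTranspose, hstarc]
  have htconj : ∀ M : Matrix (Fin m) (Fin m) ℂ, Mᵀ.map (starRingEnd ℂ) = Mᴴ := fun M => by
    ext i j
    simp [Matrix.map_apply, Matrix.conjTranspose_apply]
  have hHconj : ∀ M : Matrix (Fin m) (Fin m) ℂ, Mᴴ.map (starRingEnd ℂ) = Mᵀ := fun M => by
    ext i j
    simp [Matrix.map_apply, Matrix.conjTranspose_apply]
  have hone : (1 : Matrix (Fin m) (Fin m) ℂ).map (starRingEnd ℂ) = 1 := by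
    ext i j
    simp [Matrix.map_apply, Matrix.one_apply, apply_ite]
  have hSc : S.map (starRingEnd ℂ) = S := by
    rw [hSdef, Matrix.diagonal_map (by simp)]
    congr 1
  have hVbH : Vbᴴ = Vᵀ := by
    ext i j
    simp [hVbdef, Matrix.conjTranspose_apply, Matrix.map_apply]
  have hVbc : Vb.map (starRingEnd ℂ) = V := by
    ext i j
    simp [hVbdef, Matrix.map_apply]
  have hUH : Uᴴ * U = 1 := by
    exact (Matrix.mem_unitaryGroup_iff'.mp hU)
  have hUt : Uᵀ * U.map (starRingEnd ℂ) = 1 := by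
    have h := congrArg (fun M => M.map (starRingEnd ℂ)) hUH
    simpa only [Matrix.map_mul, hHconj, hone] using h
  have hVH : Vᴴ * Vb = 1 := by
    have h := congrArg (fun M => M.map (starRingEnd ℂ)) hV
    simpa only [hVbdef, Matrix.map_mul, htconj, hone] using h
  have key : ∀ i, c i * (σ i : ℂ) * c i = 1 := by
    intro i
    have h2 : ((Real.sqrt (σ i) : ℝ) : ℂ) ≠ 0 := by
      exact_mod_cast Real.sqrt_ne_zero'.mpr (hσ i)
    simp only [hc]
    field_simp
    exact_mod_cast (Real.sq_sqrt (hσ i).le).symm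
  have hSDS : S * D * S = 1 := by
    calc S * D * S = Matrix.diagonal (fun i => c i * (σ i : ℂ) * c i) := by
          rw [hSdef, hDdef, Matrix.diagonal_mul_diagonal, Matrix.diagonal_mul_diagonal]
      _ = 1 := by simp [key]
  have cU : ∀ X : Matrix (Fin m) (Fin m) ℂ, Uᴴ * (U * X) = X := fun X => by
    rw [← Matrix.mul_assoc, hUH, Matrix.one_mul]
  have cUt : ∀ X : Matrix (Fin m) (Fin m) ℂ, Uᵀ * (U.map (starRingEnd ℂ) * X) = X := fun X => by
    rw [← Matrix.mul_assoc, hUt, Matrix.one_mul]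
  have cS : ∀ X : Matrix (Fin m) (Fin m) ℂ, S * (D * (S * X)) = X := fun X => by
    rw [← Matrix.mul_assoc, ← Matrix.mul_assoc, hSDS, Matrix.one_mul]
  have cV : ∀ X : Matrix (Fin m) (Fin m) ℂ, Vᴴ * (Vb * X) = X := fun X => by
    rw [← Matrix.mul_assoc, hVH, Matrix.one_mul]
  have hVLV' : ∀ X : Matrix (Fin m) (Fin m) ℂ,
      S * (Uᴴ * (C₁ * (U * (S * X)))) = V * (Matrix.diagonal lam * (Vᴴ * X)) := fun X => by
    simpa [Matrix.mul_assoc] using congrArg (· * X) hVLV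
  constructor
  · rw [hTakagi]
    simp only [Matrix.conjTranspose_mul, Matrix.map_mul, hSH, hSc, hVbH, hVbc, Matrix.mul_assoc]
    rw [cU, cUt, cS, hV]
  · simp only [Matrix.conjTranspose_mul, hSH, hVbH, Matrix.mul_assoc]
    rw [hVLV' Vb]
    rw [show Vᴴ * Vb = 1 from hVH]
    rw [Matrix.mul_one, ← Matrix.mul_assoc, hV, Matrix.one_mul]
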